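/- arXiv:1807.11217 — 8 statements merged into one kernel-verified Lean document; each statement's English description precedes it below -/
import Mathlib

section
/- Let f(x) = ax/(x²+a) over ℚ_p with a ≠ 0, A = |a|_p, and r a value with 0 < r and r² < A. Then the sphere S_r(0) = {x ∈ ℚ_p : |x|_p = r} is invariant under f: for every x with |x|_p = r one has |f(x)|_p = r. Consequently every iterate f^n(x) lies in S_r(0). -/
lemma stmt6_aux (p : ℕ) [Fact p.Prime] (a : ℚ_[p]) (ha : a ≠ 0) (r : ℝ)
    (hrA : r ^ 2 < ‖a‖) (x : ℚ_[p]) (hx : ‖x‖ = r) :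
    ‖a * x / (x ^ 2 + a)‖ = r := by
  have hx2 : ‖x ^ 2‖ = r ^ 2 := by rw [norm_pow, hx]
  have hden : ‖x ^ 2 + a‖ = ‖a‖ := by
    have h := Padic.add_eq_max_of_ne (q := x ^ 2) (r := a)
      (by rw [hx2]; exact ne_of_lt hrA)
    rw [h, max_eq_right (le_of_lt (hx2 ▸ hrA))]
  have hane : ‖a‖ ≠ 0 := norm_ne_zero_iff.mpr ha
  rw [norm_div, norm_mul, hx, hden]
  field_simp

/-- For 0 < r with r² < A = |a|, the sphere S_r(0) is invariant under
f(x) = ax/(x²+a), and hence all iterates stay on it. -/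
theorem stmt6 (p : ℕ) [Fact p.Prime] (a : ℚ_[p]) (ha : a ≠ 0) (r : ℝ)
    (hr : 0 < r) (hrA : r ^ 2 < ‖a‖) :
    ∀ x : ℚ_[p], ‖x‖ = r →
      ‖a * x / (x ^ 2 + a)‖ = r ∧
      ∀ n : ℕ, ‖(fun y : ℚ_[p] => a * y / (y ^ 2 + a))^[n] x‖ = r := by
  intro x hx
  refine ⟨stmt6_aux p a ha r hrA x hx, ?_⟩
  intro n
  induction n generalizing x hx with
  | zero => simpa using hx
  | succ n ih =>
    rw [Function.iterate_succ_apply]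
    exact ih _ (stmt6_aux p a ha r hrA x hx)
end

section
/- Let f(x) = ax/(x²+a) over ℚ_p with a ≠ 0 and A = |a|_p. If |x|_p² > A, then for all n ≥ 1, |f^n(x)|_p = A/|x|_p. (After one step the orbit enters the invariant sphere of radius A/|x|_p < √A and stays there.) -/
lemma stmt7_aux (p : ℕ) [Fact p.Prime] (a y : ℚ_[p]) (h : ‖y‖ ^ 2 ≠ ‖a‖) :
    ‖y ^ 2 + a‖ = max (‖y‖ ^ 2) ‖a‖ := by
  have := Padic.add_eq_max_of_ne (q := y ^ 2) (r := a) (by rwa [norm_pow])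
  simpa [norm_pow] using this

lemma stmt7_step (p : ℕ) [Fact p.Prime] (a y : ℚ_[p]) (ha : a ≠ 0)
    (h : ‖y‖ ^ 2 < ‖a‖) : ‖a * y / (y ^ 2 + a)‖ = ‖y‖ := by
  have hd : ‖y ^ 2 + a‖ = ‖a‖ := by
    rw [stmt7_aux p a y (ne_of_lt h), max_eq_right h.le]
  rw [norm_div, norm_mul, hd, mul_comm, mul_div_assoc, div_self (norm_pos_iff.mpr ha).ne', mul_one]

/-- If |x|² > A = |a| then |fⁿ(x)| = A/|x| for all n ≥ 1. -/
theorem stmt7 (p : ℕ) [Fact p.Prime] (a : ℚ_[p]) (ha : a ≠ 0) (x : ℚ_[p])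
    (hx : ‖a‖ < ‖x‖ ^ 2) :
    ∀ n : ℕ, 1 ≤ n → ‖(fun y : ℚ_[p] => a * y / (y ^ 2 + a))^[n] x‖ = ‖a‖ / ‖x‖ := by
  have hA : 0 < ‖a‖ := norm_pos_iff.mpr ha
  have hx0 : 0 < ‖x‖ := by
    have h0 := norm_nonneg x
    nlinarith
  have h1 : ‖a * x / (x ^ 2 + a)‖ = ‖a‖ / ‖x‖ := by
    have hd : ‖x ^ 2 + a‖ = ‖x‖ ^ 2 := by
      rw [stmt7_aux p a x (ne_of_gt hx), max_eq_left hx.le]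
    rw [norm_div, norm_mul, hd]
    field_simp
  have hsmall : (‖a‖ / ‖x‖) ^ 2 < ‖a‖ := by
    rw [div_pow]
    rw [div_lt_iff₀ (by positivity)]
    nlinarith
  intro n hn
  induction n, hn using Nat.le_induction with
  | base => simpa using h1
  | succ n hn ih =>
    rw [Function.iterate_succ_apply']
    have := stmt7_step p a (((fun y : ℚ_[p] => a * y / (y ^ 2 + a))^[n] x)) ha
      (by rw [ih]; exact hsmall)
    simpa [ih] using this
end

section
/- Let f(x) = ax/(x²+a) over ℚ_p with a ≠ 0, A = |a|_p, and let r satisfy 0 < r, r² < A. For any c with |c|_p = r and any x with |x − c|_p ≤ ρ ≤ r, we have |f(x) − f(c)|_p = |x − c|_p. In particular f maps the closed ball V_ρ(c) ⊆ S_r(0) onto the closed ball V_ρ(f(c)), and f is an isometry on each invariant sphere. -/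
open Function Metric

section
variable {p : ℕ} [Fact p.Prime]

lemma denom_norm {a : ℚ_[p]} {r : ℝ} (hrA : r ^ 2 < ‖a‖)
    {x : ℚ_[p]} (hx : ‖x‖ ≤ r) (hr0 : 0 ≤ r) : ‖x ^ 2 + a‖ = ‖a‖ := by
  have h1 : ‖x ^ 2‖ < ‖a‖ := by
    rw [norm_pow]
    exact lt_of_le_of_lt (pow_le_pow_left₀ (norm_nonneg x) hx 2) hrA
  rw [Padic.add_eq_max_of_ne (ne_of_lt h1), max_eq_right (le_of_lt h1)]

lemma prod_norm {a : ℚ_[p]} {r : ℝ} (hrA : r ^ 2 < ‖a‖)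
    {x y : ℚ_[p]} (hx : ‖x‖ ≤ r) (hy : ‖y‖ ≤ r) (hr0 : 0 ≤ r) :
    ‖a - x * y‖ = ‖a‖ := by
  have h1 : ‖-(x * y)‖ < ‖a‖ := by
    rw [norm_neg, norm_mul]
    calc ‖x‖ * ‖y‖ ≤ r * r := mul_le_mul hx hy (norm_nonneg _) hr0
    _ = r ^ 2 := (sq r).symm
    _ < ‖a‖ := hrA
  rw [sub_eq_add_neg, add_comm, Padic.add_eq_max_of_ne (ne_of_lt h1),
    max_eq_right (le_of_lt h1)]

lemma key_diff {a : ℚ_[p]} (ha : a ≠ 0) {r : ℝ} (hr : 0 < r) (hrA : r ^ 2 < ‖a‖)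
    {x y : ℚ_[p]} (hx : ‖x‖ ≤ r) (hy : ‖y‖ ≤ r) :
    ‖a * x / (x ^ 2 + a) - a * y / (y ^ 2 + a)‖ = ‖x - y‖ := by
  have hxa : ‖x ^ 2 + a‖ = ‖a‖ := denom_norm hrA hx hr.le
  have hya : ‖y ^ 2 + a‖ = ‖a‖ := denom_norm hrA hy hr.le
  have hxa0 : x ^ 2 + a ≠ 0 := by
    intro h; rw [h, norm_zero] at hxa; exact ha (norm_eq_zero.mp hxa.symm)
  have hya0 : y ^ 2 + a ≠ 0 := by
    intro h; rw [h, norm_zero] at hya; exact ha (norm_eq_zero.mp hya.symm)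
  have hid : a * x / (x ^ 2 + a) - a * y / (y ^ 2 + a)
      = (x - y) * (a * (a - x * y)) / ((x ^ 2 + a) * (y ^ 2 + a)) := by
    field_simp
    ring
  rw [hid, norm_div, norm_mul, norm_mul, norm_mul, hxa, hya,
    prod_norm hrA hx hy hr.le]
  have hA0 : (0:ℝ) < ‖a‖ := norm_pos_iff.mpr ha
  field_simp

end

/-- On an invariant sphere S_r(0) (0 < r, r² < A), f is an isometry
on balls: |f(x) − f(c)| = |x − c| and f(V_ρ(c)) = V_ρ(f(c)) for ρ ≤ r. -/
theorem stmt10 (p : ℕ) [Fact p.Prime] (a : ℚ_[p]) (ha : a ≠ 0) (r ρ : ℝ)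
    (hr : 0 < r) (hrA : r ^ 2 < ‖a‖) (hρ0 : 0 ≤ ρ) (hρr : ρ ≤ r)
    (c : ℚ_[p]) (hc : ‖c‖ = r) :
    (∀ x : ℚ_[p], ‖x - c‖ ≤ ρ →
      ‖a * x / (x ^ 2 + a) - a * c / (c ^ 2 + a)‖ = ‖x - c‖) ∧
    (fun x : ℚ_[p] => a * x / (x ^ 2 + a)) '' {x : ℚ_[p] | ‖x - c‖ ≤ ρ} =
      {y : ℚ_[p] | ‖y - a * c / (c ^ 2 + a)‖ ≤ ρ} := by
  have hA0 : (0:ℝ) < ‖a‖ := norm_pos_iff.mpr ha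
  have hcr : ‖c‖ ≤ r := le_of_eq hc
  -- membership in the ball gives ‖x‖ ≤ r
  have hxr : ∀ x : ℚ_[p], ‖x - c‖ ≤ ρ → ‖x‖ ≤ r := by
    intro x hxc
    calc ‖x‖ = ‖(x - c) + c‖ := by ring_nf
    _ ≤ max ‖x - c‖ ‖c‖ := Padic.nonarchimedean _ _
    _ ≤ r := max_le (hxc.trans hρr) hcr
  have part1 : ∀ x : ℚ_[p], ‖x - c‖ ≤ ρ →
      ‖a * x / (x ^ 2 + a) - a * c / (c ^ 2 + a)‖ = ‖x - c‖ :=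
    fun x hxc => key_diff ha hr hrA (hxr x hxc) hcr
  refine ⟨part1, ?_⟩
  apply Set.eq_of_subset_of_subset
  · rintro _ ⟨x, hx, rfl⟩
    exact (part1 x hx).le.trans hx
  · intro y hy
    simp only [Set.mem_setOf_eq] at hy
    -- norms of relevant quantities
    have hca : ‖c ^ 2 + a‖ = ‖a‖ := denom_norm hrA hcr hr.le
    have hca0 : c ^ 2 + a ≠ 0 := by
      intro h; rw [h, norm_zero] at hca; exact ha (norm_eq_zero.mp hca.symm)
    have hfc : ‖a * c / (c ^ 2 + a)‖ = r := by
      rw [norm_div, norm_mul, hca, hc, mul_comm, mul_div_assoc, div_self hA0.ne', mul_one]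
    have hyr : ‖y‖ ≤ r := by
      calc ‖y‖ = ‖(y - a * c / (c ^ 2 + a)) + a * c / (c ^ 2 + a)‖ := by ring_nf
      _ ≤ max ‖y - a * c / (c ^ 2 + a)‖ ‖a * c / (c ^ 2 + a)‖ := Padic.nonarchimedean _ _
      _ ≤ r := max_le (hy.trans hρr) (le_of_eq hfc)
    -- the contraction T
    set T : ℚ_[p] → ℚ_[p] := fun x => y * (x ^ 2 + a) / a with hT
    set s : Set ℚ_[p] := {x : ℚ_[p] | ‖x - c‖ ≤ ρ} with hs
    have hsball : s = Metric.closedBall c ρ := by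
      ext x; simp [hs, Metric.mem_closedBall, dist_eq_norm]
    have hlip : ∀ x z : ℚ_[p], ‖x‖ ≤ r → ‖z‖ ≤ r →
        ‖T x - T z‖ ≤ (r ^ 2 / ‖a‖) * ‖x - z‖ := by
      intro x z hx hz
      have hid : T x - T z = y * (x + z) * (x - z) / a := by
        rw [hT]; field_simp; ring
      rw [hid, norm_div, norm_mul, norm_mul]
      rw [div_mul_eq_mul_div, div_le_div_iff₀ hA0 hA0]
      have h1 : ‖x + z‖ ≤ r := le_trans (Padic.nonarchimedean x z) (max_le hx hz)
      calc ‖y‖ * ‖x + z‖ * ‖x - z‖ * ‖a‖ ≤ r * r * ‖x - z‖ * ‖a‖ := by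
            apply mul_le_mul_of_nonneg_right _ (norm_nonneg a)
            apply mul_le_mul_of_nonneg_right _ (norm_nonneg _)
            exact mul_le_mul hyr h1 (norm_nonneg _) hr.le
      _ = r ^ 2 * ‖x - z‖ * ‖a‖ := by ring
    have hTc : ‖T c - c‖ ≤ ρ := by
      have hid : T c - c = (c ^ 2 + a) / a * (y - a * c / (c ^ 2 + a)) := by
        rw [hT]; field_simp
      rw [hid, norm_mul, norm_div, hca, div_self hA0.ne', one_mul]
      exact hy
    have hmaps : Set.MapsTo T s s := by
      intro x hx
      simp only [hs, Set.mem_setOf_eq] at hx ⊢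
      have hxr' : ‖x‖ ≤ r := hxr x hx
      have h1 : ‖T x - T c‖ ≤ ρ := by
        calc ‖T x - T c‖ ≤ (r ^ 2 / ‖a‖) * ‖x - c‖ := hlip x c hxr' hcr
        _ ≤ 1 * ρ := by
            apply mul_le_mul _ hx (norm_nonneg _) zero_le_one
            rw [div_le_one hA0]; exact hrA.le
        _ = ρ := one_mul ρ
      have h2 := Padic.nonarchimedean (T x - T c) (T c - c)
      rw [sub_add_sub_cancel] at h2
      exact h2.trans (max_le h1 hTc)
    -- Banach fixed point
    have hsc : IsComplete s := by
      rw [hsball]; exact Metric.isClosed_closedBall.isComplete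
    set K : NNReal := (r ^ 2 / ‖a‖).toNNReal with hK
    have hKc : (K : ℝ) = r ^ 2 / ‖a‖ := Real.coe_toNNReal _ (by positivity)
    have hcontr : ContractingWith K (hmaps.restrict T s s) := by
      constructor
      · rw [← NNReal.coe_lt_coe, hKc, NNReal.coe_one, div_lt_one hA0]; exact hrA
      · apply LipschitzWith.of_dist_le_mul
        rintro ⟨x, hx⟩ ⟨z, hz⟩
        simp only [Set.MapsTo.restrict, Subtype.dist_eq, dist_eq_norm, hKc]
        exact hlip x z (hxr x hx) (hxr z hz)
    have hcs : c ∈ s := by simp [hs, hρ0]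
    obtain ⟨x, hxs, hfix, -, -⟩ :=
      ContractingWith.exists_fixedPoint' hsc hmaps hcontr hcs (edist_ne_top _ _)
    refine ⟨x, hxs, ?_⟩
    have hxa0 : x ^ 2 + a ≠ 0 := by
      intro h
      have := denom_norm hrA (hxr x hxs) hr.le
      rw [h, norm_zero] at this
      exact ha (norm_eq_zero.mp this.symm)
    have hfix' : y * (x ^ 2 + a) / a = x := hfix
    field_simp at hfix' ⊢
    linear_combination -hfix'
end

section
/- Let f(x) = ax/(x²+a) over ℚ_p with a ≠ 0, A = |a|_p, and c ∈ S_r(0) with r² < A. If V_θ(c) ⊆ S_r(0) is a ball invariant under f (f(V_θ(c)) ⊆ V_θ(c)), then θ ≥ r³/A. -/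
/-- если V_θ(c) ⊆ S_r(0) is invariant under f then θ ≥ r³/A. -/
theorem stmt13 (p : ℕ) [Fact p.Prime] (a : ℚ_[p]) (ha : a ≠ 0) (r θ : ℝ)
    (hr : 0 < r) (hrA : r ^ 2 < ‖a‖) (hθ : 0 ≤ θ)
    (c : ℚ_[p]) (hc : ‖c‖ = r)
    (hsub : ∀ x : ℚ_[p], ‖x - c‖ ≤ θ → ‖x‖ = r)
    (hinv : ∀ x : ℚ_[p], ‖x - c‖ ≤ θ → ‖a * x / (x ^ 2 + a) - c‖ ≤ θ) :
    r ^ 3 / ‖a‖ ≤ θ := by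
  have hcc : ‖c ^ 2‖ < ‖a‖ := by
    rw [norm_pow, hc]; exact hrA
  have hne : ‖c ^ 2‖ ≠ ‖a‖ := ne_of_lt hcc
  have hden : ‖c ^ 2 + a‖ = ‖a‖ := by
    rw [Padic.add_eq_max_of_ne hne, max_eq_right hcc.le]
  have hden0 : c ^ 2 + a ≠ 0 := by
    intro h; rw [h, norm_zero] at hden; exact ha (norm_eq_zero.mp hden.symm)
  have key : a * c / (c ^ 2 + a) - c = -(c ^ 3) / (c ^ 2 + a) := by
    field_simp; ring
  have h2 := hinv c (by simp [hθ])
  rw [key, norm_div, norm_neg, norm_pow, hc, hden] at h2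
  exact h2
end

section
/- Let f(x) = ax/(x²+a) over ℚ_p (or ℂ_p) with a ≠ 0, A = |a|_p. If y₀ → y₁ → ... → y_{k−1} → y₀ is a periodic orbit of f (all iterates defined), then |y₀|_p = |y₁|_p = ... = |y_{k−1}|_p and this common value is ≤ √A. -/
/-- All points on a periodic orbit of f(x) = ax/(x²+a) have the same
p-adic norm, and this common value is ≤ √A where A = |a|. -/
theorem stmt15 (p : ℕ) [Fact p.Prime] (a : ℚ_[p]) (ha : a ≠ 0) (k : ℕ) (hk : 1 ≤ k)
    (y : ℕ → ℚ_[p])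
    (hden : ∀ i, (y i) ^ 2 + a ≠ 0)
    (horbit : ∀ i, a * y i / ((y i) ^ 2 + a) = y (i + 1))
    (hper : ∀ i, y (i + k) = y i) :
    (∀ i j, ‖y i‖ = ‖y j‖) ∧ ‖y 0‖ ≤ Real.sqrt ‖a‖ := by
  have hpA : (0:ℝ) < ‖a‖ := norm_pos_iff.mpr ha
  set s := Real.sqrt ‖a‖ with hsdef
  have hs0 : 0 < s := Real.sqrt_pos.mpr hpA
  have hs2 : s ^ 2 = ‖a‖ := Real.sq_sqrt hpA.le
  have hnorm : ∀ i, ‖y (i+1)‖ = ‖a‖ * ‖y i‖ / ‖y i ^ 2 + a‖ := by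
    intro i
    rw [← horbit i, norm_div, norm_mul]
  have hx2 : ∀ i, ‖(y i) ^ 2‖ = ‖y i‖ ^ 2 := fun i => norm_pow _ _
  -- key1: if s < ‖y i‖ then ‖y (i+1)‖ < s
  have key1 : ∀ i, s < ‖y i‖ → ‖y (i+1)‖ < s := by
    intro i h
    have hlt : ‖a‖ < ‖(y i) ^ 2‖ := by rw [hx2]; nlinarith
    have hden2 : ‖(y i) ^ 2 + a‖ = ‖y i‖ ^ 2 := by
      rw [Padic.add_eq_max_of_ne (ne_of_gt hlt), max_eq_left hlt.le, hx2]
    rw [hnorm, hden2]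
    rw [div_lt_iff₀ (by nlinarith)]
    nlinarith [mul_pos (mul_pos hs0 (hs0.trans h)) (sub_pos.mpr h)]
  -- key2: if ‖y i‖ < s then ‖y (i+1)‖ = ‖y i‖
  have key2 : ∀ i, ‖y i‖ < s → ‖y (i+1)‖ = ‖y i‖ := by
    intro i h
    have hlt : ‖(y i) ^ 2‖ < ‖a‖ := by
      rw [hx2]
      have h0 : 0 ≤ ‖y i‖ := norm_nonneg _
      nlinarith
    have hden2 : ‖(y i) ^ 2 + a‖ = ‖a‖ := by
      rw [Padic.add_eq_max_of_ne (ne_of_lt hlt), max_eq_right hlt.le]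
    rw [hnorm, hden2, mul_comm, mul_div_assoc, div_self hpA.ne', mul_one]
  -- key3: if ‖y i‖ = s then s ≤ ‖y (i+1)‖
  have key3 : ∀ i, ‖y i‖ = s → s ≤ ‖y (i+1)‖ := by
    intro i h
    have hle : ‖(y i) ^ 2 + a‖ ≤ ‖a‖ := by
      refine le_trans (Padic.nonarchimedean _ _) ?_
      rw [hx2, h, hs2]
      simp
    have hpos : 0 < ‖(y i) ^ 2 + a‖ := norm_pos_iff.mpr (hden i)
    rw [hnorm, h, le_div_iff₀ hpos]
    calc s * ‖(y i) ^ 2 + a‖ ≤ s * ‖a‖ := by nlinarith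
    _ = ‖a‖ * s := mul_comm _ _
  -- all norms ≤ s
  have hle : ∀ i, ‖y i‖ ≤ s := by
    intro i
    by_contra h
    push_neg at h
    have h1 : ‖y (i+1)‖ < s := key1 i h
    have h2 : ∀ n, ‖y (i+1+n)‖ < s := by
      intro n
      induction n with
      | zero => simpa using h1
      | succ n ih =>
        have := key2 (i+1+n) ih
        rw [show i+1+(n+1) = i+1+n+1 by omega, this]
        exact ih
    obtain ⟨m, hm⟩ : ∃ m, k = m + 1 := ⟨k-1, by omega⟩
    have h3 := h2 m
    rw [show i+1+m = i+k by omega, hper i] at h3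
    linarith
  -- norms constant along orbit
  have heq : ∀ i, ‖y (i+1)‖ = ‖y i‖ := by
    intro i
    rcases lt_or_eq_of_le (hle i) with h | h
    · exact key2 i h
    · exact le_antisymm (h ▸ hle (i+1)) (h ▸ key3 i h)
  have hall : ∀ n, ‖y n‖ = ‖y 0‖ := by
    intro n
    induction n with
    | zero => rfl
    | succ n ih => rw [heq n, ih]
  exact ⟨fun i j => by rw [hall i, hall j], hle 0⟩
end

section
/- Let f(x) = ax/(x²+a) over ℚ_p with a ≠ 0, suppose t = √(−2a) exists in ℚ_p, and let g = f∘f. Then g'(t) = 9 and g'(−t) = 9. Consequently |g'(±t)|_p = 1 for p ≠ 3 and |g'(±t)|_3 = 1/9, so the 2-cycle {t, −t} is indifferent for p ≠ 3 and attracting for p = 3. -/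
lemma aux_deriv (p : ℕ) [Fact p.Prime] (a : ℚ_[p]) (ha : a ≠ 0) (s : ℚ_[p])
    (hs : s ^ 2 = -(2 * a)) :
    HasDerivAt (fun x : ℚ_[p] => a * x / (x ^ 2 + a)) 3 s := by
  have hden : s ^ 2 + a ≠ 0 := by
    rw [hs]
    have : -(2 * a) + a = -a := by ring
    rw [this]
    exact neg_ne_zero.mpr ha
  have h1 : HasDerivAt (fun x : ℚ_[p] => a * x) a s := by
    simpa using (hasDerivAt_id s).const_mul a
  have h2 : HasDerivAt (fun x : ℚ_[p] => x ^ 2 + a) (2 * s) s := by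
    simpa using ((hasDerivAt_pow 2 s).add_const a)
  have := h1.div h2 hden
  refine this.congr_deriv ?_
  rw [div_eq_iff (pow_ne_zero 2 hden)]
  linear_combination (-(3 * s ^ 2 + a)) * hs
/-- g = f∘f has derivative 9 at the 2-periodic points ±t, t = √(−2a);
hence the 2-cycle is indifferent for p ≠ 3 (|9|_p = 1) and attracting for p = 3
(|9|₃ = 1/9). -/
theorem stmt17 (p : ℕ) [Fact p.Prime] (a : ℚ_[p]) (ha : a ≠ 0) (t : ℚ_[p])
    (ht : t ^ 2 = -(2 * a)) :
    HasDerivAt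
      (fun x : ℚ_[p] => a * (a * x / (x ^ 2 + a)) / ((a * x / (x ^ 2 + a)) ^ 2 + a)) 9 t ∧
    HasDerivAt
      (fun x : ℚ_[p] => a * (a * x / (x ^ 2 + a)) / ((a * x / (x ^ 2 + a)) ^ 2 + a)) 9 (-t) ∧
    (p ≠ 3 → ‖(9 : ℚ_[p])‖ = 1) ∧
    (p = 3 → ‖(9 : ℚ_[p])‖ = 1 / 9) := by
  have key : ∀ s : ℚ_[p], s ^ 2 = -(2 * a) →
      HasDerivAt
        (fun x : ℚ_[p] => a * (a * x / (x ^ 2 + a)) / ((a * x / (x ^ 2 + a)) ^ 2 + a)) 9 s := by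
    intro s hs
    have hden : s ^ 2 + a = -a := by rw [hs]; ring
    have hfs : a * s / (s ^ 2 + a) = -s := by
      rw [hden, mul_comm, mul_div_assoc, div_neg, div_self ha, mul_neg_one]
    have hinner := aux_deriv p a ha s hs
    have hns : (-s) ^ 2 = -(2 * a) := by rw [neg_pow]; simpa using hs
    have houter := aux_deriv p a ha (-s) hns
    rw [← hfs] at houter
    have := houter.comp s hinner
    refine this.congr_deriv ?_
    norm_num
  refine ⟨key t ht, key (-t) (by rw [neg_pow]; simpa using ht), ?_, ?_⟩
  · intro hp
    have h9 : ((9 : ℤ) : ℚ_[p]) = 9 := by norm_num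
    rw [← h9]
    have := Padic.norm_intCast_lt_one_iff (p := p) (k := 9)
    have hle : ‖((9:ℤ) : ℚ_[p])‖ ≤ 1 := Padic.norm_int_le_one 9
    rcases lt_or_eq_of_le hle with h | h
    · exfalso
      have hdvd : (p : ℤ) ∣ 9 := this.mp h
      have hdvd' : p ∣ 9 := by exact_mod_cast hdvd
      have h9 : (9 : ℕ) = 3 ^ 2 := by norm_num
      rw [h9] at hdvd'
      have := (Fact.out : p.Prime).dvd_of_dvd_pow hdvd'
      have : p = 3 := (Nat.prime_dvd_prime_iff_eq (Fact.out : p.Prime) (by norm_num)).mp this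
      exact hp this
    · exact h
  · intro hp
    subst hp
    have : (9 : ℚ_[3]) = (3 : ℚ_[3]) ^ 2 := by norm_num
    rw [this, norm_pow]
    have h3 : ‖(3 : ℚ_[3])‖ = (3 : ℝ)⁻¹ := by
      simpa using Padic.norm_p (p := 3)
    rw [h3]; norm_num
end

section
/- Let p = 2, f(x) = ax/(x²+a) over ℚ₂ (or ℂ₂) with a ≠ 0, A = |a|₂, and t₁ = √(−2a), t₂ = −t₁ (assuming they exist). Then |t₁|₂ = |t₂|₂ = √(A/2), |t₂ − t₁|₂ = √A/(2√2), and for any 0 < r ≤ √A/(2√2) and any x with |x − t₁|₂ = r (all iterates defined), one has |f(x) − t₂|₂ = r; symmetrically |x − t₂|₂ = r implies |f(x) − t₁|₂ = r. Thus f swaps the spheres S_r(t₁) and S_r(t₂). -/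
lemma norm_two2 : ‖(2:ℚ_[2])‖ = 1/2 := by
  have h : ((2:ℕ):ℚ_[2]) = 2 := by norm_num
  rw [← h, Padic.norm_p]; norm_num

lemma norm_three2 : ‖(3:ℚ_[2])‖ = 1 := by
  have h1 : ‖((3:ℤ):ℚ_[2])‖ ≤ 1 := Padic.norm_int_le_one 3
  have h2 : ¬ ‖((3:ℤ):ℚ_[2])‖ < 1 := by
    rw [Padic.norm_intCast_lt_one_iff]; decide
  have h : ‖((3:ℤ):ℚ_[2])‖ = 1 := le_antisymm h1 (not_lt.mp h2)
  simpa using h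

lemma key18 (a t : ℚ_[2]) (ha : a ≠ 0) (ht : t ^ 2 = -(2 * a))
    (r : ℝ) (hr : 0 < r) (hrT : r ≤ ‖t‖ / 2)
    (x : ℚ_[2]) (hx : ‖x - t‖ = r) :
    ‖a * x / (x ^ 2 + a) + t‖ = r := by
  have hApos : (0:ℝ) < ‖a‖ := norm_pos_iff.mpr ha
  have htne : t ≠ 0 := by
    intro h; rw [h] at ht; simp at ht; exact ha ht
  have hTpos : (0:ℝ) < ‖t‖ := norm_pos_iff.mpr htne
  have hT2 : ‖t‖ ^ 2 = ‖a‖ / 2 := by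
    rw [← norm_pow, ht, norm_neg, norm_mul, norm_two2]; ring
  -- ‖2x + t‖ = ‖t‖
  have hs : ‖2 * x + t‖ = ‖t‖ := by
    have e : 2 * x + t = 2 * (x - t) + 3 * t := by ring
    have n1 : ‖2 * (x - t)‖ = r / 2 := by rw [norm_mul, norm_two2, hx]; ring
    have n2 : ‖3 * t‖ = ‖t‖ := by rw [norm_mul, norm_three2]; ring
    have hne : ‖2 * (x - t)‖ ≠ ‖3 * t‖ := by rw [n1, n2]; nlinarith
    rw [e, Padic.add_eq_max_of_ne hne, n1, n2]
    rw [max_eq_right]; nlinarith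
  -- ‖x² + a‖ = ‖a‖
  have hden : ‖x ^ 2 + a‖ = ‖a‖ := by
    have e : x ^ 2 + a = ((x - t) ^ 2 + 2 * t * (x - t)) + (-a) := by
      linear_combination ht
    have small : ‖(x - t) ^ 2 + 2 * t * (x - t)‖ < ‖a‖ := by
      refine lt_of_le_of_lt (Padic.nonarchimedean _ _) ?_
      have n1 : ‖(x - t) ^ 2‖ = r ^ 2 := by rw [norm_pow, hx]
      have n2 : ‖2 * t * (x - t)‖ = ‖t‖ * r / 2 := by
        rw [norm_mul, norm_mul, norm_two2, hx]; ring
      rw [n1, n2]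
      simp only [max_lt_iff]; constructor <;> nlinarith
    have hne : ‖(x - t) ^ 2 + 2 * t * (x - t)‖ ≠ ‖(-a : ℚ_[2])‖ := by
      rw [norm_neg]; exact ne_of_lt small
    rw [e, Padic.add_eq_max_of_ne hne, norm_neg, max_eq_right (le_of_lt small)]
  -- numerator norm
  have hnum : ‖t * x ^ 2 + a * x + a * t‖ = ‖a‖ * r := by
    have e : 2 * (t * x ^ 2 + a * x + a * t) = t * (x - t) * (2 * x + t) := by
      linear_combination (x + t) * ht
    have h2 : ‖2 * (t * x ^ 2 + a * x + a * t)‖ = ‖t‖ * r * ‖t‖ := by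
      rw [e, norm_mul, norm_mul, hx, hs]
    rw [norm_mul, norm_two2] at h2
    nlinarith
  have hd0 : x ^ 2 + a ≠ 0 := by
    intro h; rw [h] at hden; simp at hden; linarith
  have e : a * x / (x ^ 2 + a) + t = (t * x ^ 2 + a * x + a * t) / (x ^ 2 + a) := by
    field_simp; ring
  rw [e, norm_div, hnum, hden]
  field_simp

/-- Case p = 2. With t₁ = t = √(−2a), t₂ = −t, we have
|t₁|₂ = |t₂|₂ = √(A/2), |t₂ − t₁|₂ = √A/(2√2), and for 0 < r ≤ √A/(2√2),
f swaps the spheres S_r(t₁) and S_r(t₂). -/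
theorem stmt18 (a : ℚ_[2]) (ha : a ≠ 0) (t : ℚ_[2]) (ht : t ^ 2 = -(2 * a)) :
    ‖t‖ = Real.sqrt (‖a‖ / 2) ∧ ‖-t‖ = Real.sqrt (‖a‖ / 2) ∧
    ‖(-t) - t‖ = Real.sqrt ‖a‖ / (2 * Real.sqrt 2) ∧
    ∀ r : ℝ, 0 < r → r ≤ Real.sqrt ‖a‖ / (2 * Real.sqrt 2) →
      ∀ x : ℚ_[2],
        (‖x - t‖ = r → ‖a * x / (x ^ 2 + a) - (-t)‖ = r) ∧
        (‖x - (-t)‖ = r → ‖a * x / (x ^ 2 + a) - t‖ = r) := by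
  have hT2 : ‖t‖ ^ 2 = ‖a‖ / 2 := by
    rw [← norm_pow, ht, norm_neg, norm_mul, norm_two2]; ring
  have nt : ‖t‖ = Real.sqrt (‖a‖ / 2) := by
    have h := Real.sqrt_sq (norm_nonneg t)
    rw [hT2] at h; exact h.symm
  have heq : Real.sqrt ‖a‖ / (2 * Real.sqrt 2) = ‖t‖ / 2 := by
    rw [nt, Real.sqrt_div (norm_nonneg a)]; ring
  refine ⟨nt, by rw [norm_neg]; exact nt, ?_, ?_⟩
  · have e : (-t) - t = -(2 * t) := by ring
    rw [e, norm_neg, norm_mul, norm_two2, heq]; ring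
  · intro r hr hle x
    rw [heq] at hle
    constructor
    · intro hx
      have := key18 a t ha ht r hr hle x hx
      simpa [sub_neg_eq_add] using this
    · intro hx
      have hx' : ‖(-x) - t‖ = r := by
        rw [show (-x) - t = -(x - (-t)) by ring, norm_neg]; exact hx
      have h := key18 a t ha ht r hr hle (-x) hx'
      have e : a * (-x) / ((-x) ^ 2 + a) + t = -(a * x / (x ^ 2 + a) - t) := by
        rw [neg_pow]; ring
      rw [e, norm_neg] at h
      exact h
end

section
/- Let p = 3, f(x) = ax/(x²+a) over ℚ₃ (or ℂ₃) with a ≠ 0, A = |a|₃, and t₁ = √(−2a), t₂ = −t₁ 2-periodic points of f (assuming they exist), with |t₁|₃ = |t₂|₃ = |t₂−t₁|₃ = √A. Then for any r < √A and any x with |x − t₁|₃ = r (whose orbit avoids the poles), the even iterates converge to t₁ and the odd iterates converge to t₂: lim_{n→∞} f^{2n}(x) = t₁ and lim_{n→∞} f^{2n+1}(x) = t₂. In particular, |f(x) − t₂|₃ ≤ max(r²/√A, r/3) < r whenever 0 < r < √A. -/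
private lemma norm_two_q3 : ‖(2:ℚ_[3])‖ = 1 := by
  have h1 : ‖((2:ℤ):ℚ_[3])‖ ≤ 1 := Padic.norm_int_le_one 2
  have h2 : ¬ ‖((2:ℤ):ℚ_[3])‖ < 1 := by
    rw [Padic.norm_intCast_lt_one_iff]; decide
  have h3 : ((2:ℤ):ℚ_[3]) = 2 := by norm_num
  rw [h3] at h1 h2; linarith [lt_or_eq_of_le h1]

private lemma norm_three_q3 : ‖(3:ℚ_[3])‖ = (3:ℝ)⁻¹ := by
  have h : ((3:ℕ):ℚ_[3]) = 3 := by norm_num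
  rw [← h]; simpa using Padic.norm_p (p := 3)

private lemma norm_t_eq (a t : ℚ_[3]) (ht : t ^ 2 = -(2 * a)) :
    ‖t‖ = Real.sqrt ‖a‖ := by
  have h1 : ‖t‖ ^ 2 = ‖a‖ := by
    rw [← norm_pow, ht]
    rw [norm_neg, norm_mul, norm_two_q3, one_mul]
  rw [← h1, Real.sqrt_sq (norm_nonneg t)]

/-- The key one-step contraction estimate. -/
private lemma key_step (a t : ℚ_[3]) (ha : a ≠ 0) (ht : t ^ 2 = -(2 * a))
    (x : ℚ_[3]) (hx : x ^ 2 + a ≠ 0) (hlt : ‖x - t‖ < Real.sqrt ‖a‖) :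
    ‖a * x / (x ^ 2 + a) - (-t)‖ ≤
      max (‖x - t‖ ^ 2 / Real.sqrt ‖a‖) (‖x - t‖ / 3) := by
  set s : ℝ := Real.sqrt ‖a‖ with hs
  have hA0 : (0:ℝ) < ‖a‖ := norm_pos_iff.mpr ha
  have hs0 : (0:ℝ) < s := Real.sqrt_pos.mpr hA0
  have hss : s * s = ‖a‖ := Real.mul_self_sqrt (le_of_lt hA0)
  set u : ℚ_[3] := x - t with hu
  have hnt : ‖t‖ = s := norm_t_eq a t ht
  have hur : ‖u‖ < s := hlt
  have hun : (0:ℝ) ≤ ‖u‖ := norm_nonneg u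
  -- rewrite the difference
  have hrw : a * x / (x ^ 2 + a) - (-t) = u * (t * u - 3 * a) / (x ^ 2 + a) := by
    rw [hu]
    field_simp
    ring_nf
    linear_combination (2 * x - t) * ht
  -- denominator norm
  have hden' : x ^ 2 + a = (u ^ 2 + 2 * t * u) + (-a) := by
    rw [hu]; linear_combination ht
  have hnum_small : ‖u ^ 2 + 2 * t * u‖ < ‖a‖ := by
    refine lt_of_le_of_lt (Padic.nonarchimedean _ _) ?_
    have h1 : ‖u ^ 2‖ < ‖a‖ := by
      rw [norm_pow]
      calc ‖u‖ ^ 2 = ‖u‖ * ‖u‖ := sq ‖u‖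
        _ < s * s := by
            apply mul_lt_mul' (le_of_lt hur) hur hun hs0
        _ = ‖a‖ := hss
    have h2 : ‖2 * t * u‖ < ‖a‖ := by
      rw [norm_mul, norm_mul, norm_two_q3, one_mul, hnt, ← hss]
      exact mul_lt_mul_of_pos_left hur hs0
    exact max_lt h1 h2
  have hden : ‖x ^ 2 + a‖ = ‖a‖ := by
    rw [hden', Padic.add_eq_max_of_ne (by rw [norm_neg]; exact ne_of_lt hnum_small),
      norm_neg]
    exact max_eq_right (le_of_lt hnum_small)
  -- numerator bound
  have hnum : ‖u * (t * u - 3 * a)‖ ≤ ‖u‖ * max (s * ‖u‖) (‖a‖ / 3) := by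
    rw [norm_mul]
    apply mul_le_mul_of_nonneg_left _ hun
    have h1 : ‖t * u - 3 * a‖ ≤ max ‖t * u‖ ‖-(3 * a)‖ := by
      rw [sub_eq_add_neg]; exact Padic.nonarchimedean _ _
    refine h1.trans ?_
    rw [norm_neg, norm_mul, norm_mul, hnt, norm_three_q3]
    apply max_le_max le_rfl
    rw [inv_mul_eq_div]
  rw [hrw, norm_div, hden]
  have hstep2 : ‖u * (t * u - 3 * a)‖ / ‖a‖ ≤ ‖u‖ * (s * ‖u‖ ⊔ ‖a‖ / 3) / ‖a‖ := by
    gcongr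
  refine hstep2.trans (le_of_eq ?_)
  rw [mul_max_of_nonneg _ _ hun, ← max_div_div_right (le_of_lt hA0)]
  have e1 : ‖u‖ * (s * ‖u‖) / ‖a‖ = ‖u‖ ^ 2 / s := by rw [← hss]; field_simp
  have e2 : ‖u‖ * (‖a‖ / 3) / ‖a‖ = ‖u‖ / 3 := by field_simp
  rw [e1, e2]

/-- Case p = 3. With 2-periodic points t₁ = t = √(−2a), t₂ = −t of
norm √A, for any starting point x with |x − t₁|₃ = r < √A whose orbit avoids the
poles, even iterates tend to t₁ and odd iterates tend to t₂; in particular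
|f(x) − t₂|₃ ≤ max(r²/√A, r/3) < r. -/
theorem stmt19 (a : ℚ_[3]) (ha : a ≠ 0) (t : ℚ_[3]) (ht : t ^ 2 = -(2 * a)) :
    ‖t‖ = Real.sqrt ‖a‖ ∧ ‖(-t) - t‖ = Real.sqrt ‖a‖ ∧
    ∀ r : ℝ, 0 < r → r < Real.sqrt ‖a‖ →
      ∀ x : ℚ_[3],
        (∀ n : ℕ, ((fun y : ℚ_[3] => a * y / (y ^ 2 + a))^[n] x) ^ 2 + a ≠ 0) →
        ‖x - t‖ = r →
        Filter.Tendsto (fun n : ℕ => (fun y : ℚ_[3] => a * y / (y ^ 2 + a))^[2 * n] x)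
          Filter.atTop (nhds t) ∧
        Filter.Tendsto (fun n : ℕ => (fun y : ℚ_[3] => a * y / (y ^ 2 + a))^[2 * n + 1] x)
          Filter.atTop (nhds (-t)) ∧
        ‖a * x / (x ^ 2 + a) - (-t)‖ ≤ max (r ^ 2 / Real.sqrt ‖a‖) (r / 3) ∧
        ‖a * x / (x ^ 2 + a) - (-t)‖ < r := by
  set s : ℝ := Real.sqrt ‖a‖ with hs
  have hA0 : (0:ℝ) < ‖a‖ := norm_pos_iff.mpr ha
  have hs0 : (0:ℝ) < s := Real.sqrt_pos.mpr hA0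
  have hnt : ‖t‖ = s := norm_t_eq a t ht
  refine ⟨hnt, ?_, ?_⟩
  · have : (-t) - t = 2 * (-t) := by ring
    rw [this, norm_mul, norm_two_q3, one_mul, norm_neg, hnt]
  intro r hr0 hrs x hpoles hxr
  set g : ℚ_[3] → ℚ_[3] := fun y => a * y / (y ^ 2 + a) with hg
  set c : ℝ := max (r / s) (1 / 3) with hc
  have hc0 : (0:ℝ) < c := lt_of_lt_of_le (by norm_num) (le_max_right _ _)
  have hc1 : c < 1 := by
    apply max_lt _ (by norm_num)
    rw [div_lt_one hs0]; exact hrs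
  -- main induction
  have main : ∀ n : ℕ, ‖g^[n] x - (-1) ^ n * t‖ ≤ r * c ^ n := by
    intro n
    induction n with
    | zero => simp [hxr]
    | succ n ih =>
      set t' : ℚ_[3] := (-1) ^ n * t with ht'
      have ht'sq : t' ^ 2 = -(2 * a) := by
        rw [ht', mul_pow, ← pow_mul, mul_comm n 2, pow_mul]
        norm_num [ht]
      have hcn1 : c ^ n ≤ 1 := pow_le_one₀ (le_of_lt hc0) (le_of_lt hc1)
      have hRr : r * c ^ n ≤ r := by
        nlinarith
      have hd_lt : ‖g^[n] x - t'‖ < s := lt_of_le_of_lt (ih.trans hRr) hrs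
      have hstep := key_step a t' ha ht'sq (g^[n] x) (hpoles n) hd_lt
      have hit : g^[n + 1] x = a * (g^[n] x) / ((g^[n] x) ^ 2 + a) := by
        rw [Function.iterate_succ_apply']
      have hsign : (-1:ℚ_[3]) ^ (n + 1) * t = -t' := by
        rw [ht', pow_succ]; ring
      rw [hit, hsign]
      refine hstep.trans ?_
      set d : ℝ := ‖g^[n] x - t'‖ with hd
      have hd0 : (0:ℝ) ≤ d := norm_nonneg _
      have hR0 : (0:ℝ) ≤ r * c ^ n := by positivity
      have h1 : d ^ 2 / s ≤ (r * c ^ n) * c := by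
        have hds : d / s ≤ c := by
          refine le_trans ?_ (le_max_left (r / s) (1/3))
          gcongr
          exact ih.trans hRr
        calc d ^ 2 / s = d * (d / s) := by ring
          _ ≤ (r * c ^ n) * c := by
              apply mul_le_mul ih hds (by positivity) hR0
      have h2 : d / 3 ≤ (r * c ^ n) * c := by
        have h13 : (1:ℝ) / 3 ≤ c := le_max_right _ _
        calc d / 3 = d * (1 / 3) := by ring
          _ ≤ (r * c ^ n) * c := mul_le_mul ih h13 (by norm_num) hR0
      calc max (d ^ 2 / s) (d / 3) ≤ (r * c ^ n) * c := max_le h1 h2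
        _ = r * c ^ (n + 1) := by ring
  -- convergence of a subsequence shifted by k
  have conv : ∀ (k : ℕ) (b : ℚ_[3]), (∀ n : ℕ, ‖g^[2 * n + k] x - b‖ ≤ r * c ^ (2 * n + k)) →
      Filter.Tendsto (fun n : ℕ => g^[2 * n + k] x) Filter.atTop (nhds b) := by
    intro k b hbd
    rw [tendsto_iff_norm_sub_tendsto_zero]
    apply squeeze_zero (fun n => norm_nonneg _) hbd
    have : Filter.Tendsto (fun n : ℕ => r * c ^ n) Filter.atTop (nhds 0) := by
      simpa using (tendsto_pow_atTop_nhds_zero_of_lt_one (le_of_lt hc0) hc1).const_mul r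
    have h2 : Filter.Tendsto (fun n : ℕ => 2 * n + k) Filter.atTop Filter.atTop := by
      exact StrictMono.tendsto_atTop (fun m n h => by omega)
    exact this.comp h2
  refine ⟨?_, ?_, ?_, ?_⟩
  · have := conv 0 t (fun n => by simpa [pow_mul] using main (2 * n))
    simpa using this
  · exact conv 1 (-t) (fun n => by simpa [pow_succ, pow_mul] using main (2 * n + 1))
  all_goals {
    have hx2 : x ^ 2 + a ≠ 0 := by simpa using hpoles 0
    have hkey := key_step a t ha ht x hx2 (by rw [hxr]; exact hrs)
    rw [hxr] at hkey
    first
    | exact hkey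
    | { refine lt_of_le_of_lt hkey (max_lt ?_ (by linarith))
        rw [div_lt_iff₀ hs0]
        calc r ^ 2 = r * r := sq r
          _ < r * s := by exact mul_lt_mul_of_pos_left hrs hr0 }
  }
end
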